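/- In the linear example with dynamics dX^{0,N}_t = (a X^N_t − ½b² Ȳ^{0,N}_t)dt + D₀dW⁰_t and dX^N_t = cX^{0,N}_t dt + (D/N)d(∑_{i=1}^N W^i_t), compared with the limiting system dX⁰_t = (aX̄_t − ½b²P̄⁰_t)dt + D₀dW⁰_t, dX̄_t = cX⁰_t dt driven by the same W⁰ and with the same feedback matrices, for all t ∈ [0,T]: |X^{0,N}_t − X⁰_t| + |X^N_t − X̄_t| ≤ e^{Kt}·(D/N)·max_{0≤s≤t}|∑_{i=1}^N W^i_s| almost surely, where K depends on the coefficients; consequently X^{0,N}_t → X⁰_t and X^N_t → X̄_t almost surely as N → ∞. -/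

import Mathlib

open MeasureTheory ProbabilityTheory Filter
open scoped ENNReal NNReal Topology

noncomputable section

/-- Squared 2-Wasserstein distance between two measures, defined via couplings with
quadratic cost. -/
def w2sq {E : Type*} [MeasurableSpace E] [Dist E] (μ ν : Measure E) : ℝ :=
  sInf { r : ℝ | ∃ π : Measure (E × E), IsProbabilityMeasure π ∧
    π.map Prod.fst = μ ∧ π.map Prod.snd = ν ∧ r = ∫ p, dist p.1 p.2 ^ 2 ∂π }

/-- 2-Wasserstein distance. -/
def W2 {E : Type*} [MeasurableSpace E] [Dist E] (μ ν : Measure E) : ℝ :=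
  Real.sqrt (w2sq μ ν)

/-- `κ` is a regular conditional distribution of the random variable `X` given the
sub-σ-field `G` under `P`. -/
def IsCondDistrib {Ω E : Type*} {mΩ : MeasurableSpace Ω} [MeasurableSpace E]
    (X : Ω → E) (P : Measure Ω) (G : MeasurableSpace Ω) (κ : Ω → Measure E) : Prop :=
  (∀ ω, IsProbabilityMeasure (κ ω)) ∧
  (∀ s : Set E, MeasurableSet s → Measurable[G] (fun ω => (κ ω s).toReal)) ∧
  (∀ s : Set E, MeasurableSet s →
    (fun ω => (κ ω s).toReal) =ᵐ[P] P[(X ⁻¹' s).indicator (fun _ => (1:ℝ)) | G])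

/-- `B` is a standard real Brownian motion with respect to the filtration `F` under `P`:
adapted, `B 0 = 0`, continuous paths, Gaussian increments, increments independent
of the past. -/
def IsBM {Ω : Type*} {mΩ : MeasurableSpace Ω} (P : Measure Ω) (F : ℝ → MeasurableSpace Ω)
    (B : ℝ → Ω → ℝ) : Prop :=
  (∀ t, Measurable[F t] (B t)) ∧ (∀ ω, B 0 ω = 0) ∧
  (∀ ω, Continuous fun t => B t ω) ∧
  (∀ s t : ℝ, 0 ≤ s → s ≤ t →
    P.map (fun ω => B t ω - B s ω) = gaussianReal 0 ((t - s).toNNReal)) ∧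
  (∀ s t : ℝ, 0 ≤ s → s ≤ t →
    Indep (MeasurableSpace.comap (fun ω => B t ω - B s ω) inferInstance) (F s) P)

/-- `B` is an `m`-dimensional Brownian motion with respect to the filtration `F` under `P`. -/
def IsBMd {Ω : Type*} {m : ℕ} {mΩ : MeasurableSpace Ω} (P : Measure Ω)
    (F : ℝ → MeasurableSpace Ω) (B : ℝ → Ω → Fin m → ℝ) : Prop :=
  (∀ t, Measurable[F t] (B t)) ∧ (∀ ω, B 0 ω = 0) ∧
  (∀ ω i, Continuous fun t => B t ω i) ∧
  (∀ s t : ℝ, 0 ≤ s → s ≤ t →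
    P.map (fun ω => B t ω - B s ω) =
      Measure.pi (fun _ : Fin m => gaussianReal 0 ((t - s).toNNReal))) ∧
  (∀ s t : ℝ, 0 ≤ s → s ≤ t →
    Indep (MeasurableSpace.comap (fun ω => B t ω - B s ω) inferInstance) (F s) P)

/-- Squared Euclidean norm of a vector. -/
def vsq {n : ℕ} (v : Fin n → ℝ) : ℝ := ∑ i, (v i) ^ 2

/-- Squared Frobenius norm of a matrix. -/
def msq {n m : ℕ} (A : Matrix (Fin n) (Fin m) ℝ) : ℝ := ∑ i, ∑ j, (A i j) ^ 2

/-- Elementary stochastic integral of a simple matrix-valued process against `B`. -/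
def simpleInt {Ω : Type*} {n m : ℕ} (B : ℝ → Ω → Fin m → ℝ) (N : ℕ) (τ : ℕ → ℝ)
    (ξ : ℕ → Ω → Matrix (Fin n) (Fin m) ℝ) (ω : Ω) : Fin n → ℝ :=
  ∑ i ∈ Finset.range N, (ξ i ω).mulVec (B (τ (i + 1)) ω - B (τ i) ω)

/-- `I` is the Itô stochastic integral `∫₀ᵀ H dB`: it is the `L²(P)` limit of elementary
integrals of adapted simple processes approximating `H` in `L²(dt ⊗ dP)`. -/
def IsItoInt {Ω : Type*} {n m : ℕ} {mΩ : MeasurableSpace Ω} (P : Measure Ω)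
    (F : ℝ → MeasurableSpace Ω) (B : ℝ → Ω → Fin m → ℝ) (T : ℝ)
    (H : ℝ → Ω → Matrix (Fin n) (Fin m) ℝ) (I : Ω → Fin n → ℝ) : Prop :=
  ∀ ε > (0 : ℝ), ∃ (N : ℕ) (τ : ℕ → ℝ) (ξ : ℕ → Ω → Matrix (Fin n) (Fin m) ℝ),
    Monotone τ ∧ τ 0 = 0 ∧ τ N = T ∧
    (∀ i j k, Measurable[F (τ i)] (fun ω => ξ i ω j k)) ∧
    (∫ ω, vsq (I ω - simpleInt B N τ ξ ω) ∂P) ≤ ε ∧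
    (∫ ω, ∫ t in Set.Ioc 0 T, msq (H t ω -
        ∑ i ∈ Finset.range N, Set.indicator (Set.Ioc (τ i) (τ (i + 1)))
          (fun _ => ξ i ω) t) ∂volume ∂P) ≤ ε

/-- Elementary stochastic integral, scalar case. -/
def simpleInt1 {Ω : Type*} (B : ℝ → Ω → ℝ) (N : ℕ) (τ : ℕ → ℝ)
    (ξ : ℕ → Ω → ℝ) (ω : Ω) : ℝ :=
  ∑ i ∈ Finset.range N, ξ i ω * (B (τ (i + 1)) ω - B (τ i) ω)

/-- `I` is the scalar Itô stochastic integral `∫₀ᵀ H dB`. -/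
def IsItoInt1 {Ω : Type*} {mΩ : MeasurableSpace Ω} (P : Measure Ω)
    (F : ℝ → MeasurableSpace Ω) (B : ℝ → Ω → ℝ) (T : ℝ)
    (H : ℝ → Ω → ℝ) (I : Ω → ℝ) : Prop :=
  ∀ ε > (0 : ℝ), ∃ (N : ℕ) (τ : ℕ → ℝ) (ξ : ℕ → Ω → ℝ),
    Monotone τ ∧ τ 0 = 0 ∧ τ N = T ∧
    (∀ i, Measurable[F (τ i)] (ξ i)) ∧
    (∫ ω, (I ω - simpleInt1 B N τ ξ ω) ^ 2 ∂P) ≤ ε ∧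
    (∫ ω, ∫ t in Set.Ioc 0 T, (H t ω -
        ∑ i ∈ Finset.range N, Set.indicator (Set.Ioc (τ i) (τ (i + 1)))
          (fun _ => ξ i ω) t) ^ 2 ∂volume ∂P) ≤ ε

/-- The filtration generated by the first `r` components of the process `W` up to time `t`. -/
def filtr {Ω : Type*} {m r : ℕ} (hrm : r ≤ m) (W : ℝ → Ω → Fin m → ℝ) (t : ℝ) :
    MeasurableSpace Ω :=
  MeasurableSpace.comap
    (fun ω (p : {s : ℝ // 0 ≤ s ∧ s ≤ t} × Fin r) => W p.1.1 ω (Fin.castLE hrm p.2))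
    MeasurableSpace.pi

/-- `X` together with the conditional-law flow `μflow` is a strong solution of the
conditional McKean–Vlasov SDE
`dX_t = b(t,ω,X_t,L(X_t|G_t)) dt + σ'(t,ω,X_t,L(X_t|G_t)) dW_t`, `X_0 = x₀`, on `[0,T]`. -/
def SolvesCMKV {Ω : Type*} {n m : ℕ} {mΩ : MeasurableSpace Ω} (P : Measure Ω)
    (F G : ℝ → MeasurableSpace Ω) (W : ℝ → Ω → Fin m → ℝ) (T : ℝ) (x₀ : Fin n → ℝ)
    (b : ℝ → Ω → (Fin n → ℝ) → Measure (Fin n → ℝ) → Fin n → ℝ)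
    (σ' : ℝ → Ω → (Fin n → ℝ) → Measure (Fin n → ℝ) → Matrix (Fin n) (Fin m) ℝ)
    (X : ℝ → Ω → Fin n → ℝ) (μflow : ℝ → Ω → Measure (Fin n → ℝ)) : Prop :=
  (∀ t, Measurable[F t] (X t)) ∧ (∀ ω, Continuous fun t => X t ω) ∧
  (∀ ω, X 0 ω = x₀) ∧
  (∀ t, IsCondDistrib (X t) P (G t) (μflow t)) ∧
  ∀ t ∈ Set.Icc (0 : ℝ) T, ∃ I : Ω → Fin n → ℝ,
    IsItoInt P F W t (fun s ω => σ' s ω (X s ω) (μflow s ω)) I ∧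
    ∀ᵐ ω ∂P, X t ω = x₀ + (∫ s in Set.Ioc 0 t, b s ω (X s ω) (μflow s ω)) + I ω

/-- Lipschitz continuity of the coefficients of a conditional McKean–Vlasov SDE, in the
state variable and the measure variable (in the 2-Wasserstein distance). -/
def LipCMKV {Ω : Type*} {n m : ℕ} (K : ℝ)
    (b : ℝ → Ω → (Fin n → ℝ) → Measure (Fin n → ℝ) → Fin n → ℝ)
    (σ' : ℝ → Ω → (Fin n → ℝ) → Measure (Fin n → ℝ) → Matrix (Fin n) (Fin m) ℝ) : Prop :=
  ∀ (t : ℝ) (ω : Ω) (x x' : Fin n → ℝ) (μ ν : Measure (Fin n → ℝ)),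
    IsProbabilityMeasure μ → IsProbabilityMeasure ν →
    Real.sqrt (vsq (b t ω x μ - b t ω x' ν)) + Real.sqrt (msq (σ' t ω x μ - σ' t ω x' ν)) ≤
      K * (Real.sqrt (vsq (x - x')) + W2 μ ν)

/-- Adaptedness of the (possibly random) coefficients to the sub-filtration `G`. -/
def CoeffAdapted {Ω : Type*} {n m : ℕ} (G : ℝ → MeasurableSpace Ω)
    (b : ℝ → Ω → (Fin n → ℝ) → Measure (Fin n → ℝ) → Fin n → ℝ)
    (σ' : ℝ → Ω → (Fin n → ℝ) → Measure (Fin n → ℝ) → Matrix (Fin n) (Fin m) ℝ) : Prop :=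
  ∀ (t : ℝ) (x : Fin n → ℝ) (μ : Measure (Fin n → ℝ)),
    Measurable[G t] (fun ω => b t ω x μ) ∧
    ∀ i j, Measurable[G t] (fun ω => σ' t ω x μ i j)

/-- Integrability of the coefficients at the origin, with exponent `p`. -/
def IntegAtZero {Ω : Type*} {n m : ℕ} {mΩ : MeasurableSpace Ω} (P : Measure Ω) (T p : ℝ)
    (b : ℝ → Ω → (Fin n → ℝ) → Measure (Fin n → ℝ) → Fin n → ℝ)
    (σ' : ℝ → Ω → (Fin n → ℝ) → Measure (Fin n → ℝ) → Matrix (Fin n) (Fin m) ℝ) : Prop :=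
  (∫⁻ ω, ∫⁻ t in Set.Ioc 0 T, ENNReal.ofReal
      (Real.sqrt (vsq (b t ω 0 (Measure.dirac 0))) ^ p +
        Real.sqrt (msq (σ' t ω 0 (Measure.dirac 0))) ^ p) ∂volume ∂P) < ⊤


lemma my_gronwall (t K : ℝ) (ht : 0 ≤ t) (hK : 0 < K) (Z A : ℝ → ℝ)
    (hZ : Continuous Z) (hA : Continuous A)
    (hb : ∀ u ∈ Set.Icc 0 t, Z u ≤ A u + K * ∫ s in Set.Ioc 0 u, Z s) :
    Z t ≤ A t + K * Real.exp (K * t) * ∫ s in Set.Ioc 0 t, Real.exp (-(K * s)) * A s := by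
  rcases eq_or_lt_of_le ht with h0 | h0
  · have := hb 0 ⟨le_rfl, ht⟩
    simp only [Set.Ioc_self, Measure.restrict_empty, integral_zero_measure, mul_zero,
      add_zero] at this ⊢
    rw [← h0]
    simpa using this
  set v : ℝ → ℝ := fun u => ∫ s in (0:ℝ)..u, Z s with hv_def
  set w : ℝ → ℝ := fun u => ∫ s in (0:ℝ)..u, Real.exp (-(K * s)) * A s with hw_def
  have hAc : Continuous fun s => Real.exp (-(K * s)) * A s := by
    exact (((continuous_const.mul continuous_id).neg).rexp).mul hA
  have hv : ∀ u, HasDerivAt v (Z u) u := fun u => (hZ.integral_hasStrictDerivAt 0 u).hasDerivAt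
  have hw : ∀ u, HasDerivAt w (Real.exp (-(K * u)) * A u) u := fun u =>
    (hAc.integral_hasStrictDerivAt 0 u).hasDerivAt
  set φ : ℝ → ℝ := fun u => Real.exp (-(K * u)) * v u - w u with hφ_def
  have hφ : ∀ u, HasDerivAt φ
      (Real.exp (-(K * u)) * (-K) * v u + Real.exp (-(K * u)) * Z u
        - Real.exp (-(K * u)) * A u) u := by
    intro u
    have he : HasDerivAt (fun u => Real.exp (-(K * u))) (Real.exp (-(K * u)) * (-K)) u := by
      have : HasDerivAt (fun u : ℝ => -(K * u)) (-K) u := by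
        simpa using ((hasDerivAt_id u).const_mul (-K))
      exact this.exp
    exact (he.mul (hv u)).sub (hw u)
  have hbv : ∀ u ∈ Set.Icc (0:ℝ) t, Z u ≤ A u + K * v u := by
    intro u hu
    have := hb u hu
    rwa [← intervalIntegral.integral_of_le hu.1] at this
  have hmono : AntitoneOn φ (Set.Icc 0 t) := by
    apply antitoneOn_of_deriv_nonpos (convex_Icc 0 t)
    · exact (((continuous_const.mul continuous_id).neg.rexp.mul
        (intervalIntegral.continuous_primitive hZ.intervalIntegrable 0)).sub
        (intervalIntegral.continuous_primitive hAc.intervalIntegrable 0)).continuousOn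
    · exact fun u hu => (hφ u).differentiableAt.differentiableWithinAt
    · intro u hu
      rw [interior_Icc] at hu
      rw [(hφ u).deriv]
      have h1 : Z u ≤ A u + K * v u := hbv u ⟨hu.1.le, hu.2.le⟩
      have h2 : (0:ℝ) < Real.exp (-(K * u)) := Real.exp_pos _
      nlinarith [h2]
  have hφ0 : φ 0 = 0 := by simp [hφ_def, hv_def, hw_def]
  have hφt : φ t ≤ 0 := by
    rw [← hφ0]
    exact hmono (Set.left_mem_Icc.2 ht) (Set.right_mem_Icc.2 ht) ht
  have hvt : v t ≤ Real.exp (K * t) * w t := by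
    have h1 : Real.exp (-(K * t)) * v t ≤ w t := by
      simp only [hφ_def] at hφt; linarith
    have h2 := mul_le_mul_of_nonneg_left h1 (Real.exp_pos (K * t)).le
    rwa [← mul_assoc, ← Real.exp_add, add_neg_cancel, Real.exp_zero, one_mul] at h2
  have hZt : Z t ≤ A t + K * v t := hbv t (Set.right_mem_Icc.2 ht)
  have hwt : w t = ∫ s in Set.Ioc 0 t, Real.exp (-(K * s)) * A s := by
    rw [hw_def]; exact intervalIntegral.integral_of_le ht
  calc Z t ≤ A t + K * v t := hZt
    _ ≤ A t + K * (Real.exp (K * t) * w t) := by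
        have := mul_le_mul_of_nonneg_left hvt hK.le
        linarith
    _ = A t + K * Real.exp (K * t) * ∫ s in Set.Ioc 0 t, Real.exp (-(K * s)) * A s := by
        rw [hwt]; ring

lemma ae_tendsto_of_summable {Ω : Type*} [MeasurableSpace Ω] (P : Measure Ω)
    (Y : ℕ → Ω → ℝ) (h0 : ∀ k ω, 0 ≤ Y k ω)
    (hmeas : ∀ k, AEMeasurable (fun ω => ENNReal.ofReal (Y k ω)) P)
    (hsum : ∑' k, ∫⁻ ω, ENNReal.ofReal (Y k ω) ∂P ≠ ⊤) :
    ∀ᵐ ω ∂P, Tendsto (fun k => Y k ω) atTop (𝓝 0) := by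
  have h1 : ∫⁻ ω, ∑' k, ENNReal.ofReal (Y k ω) ∂P ≠ ⊤ := by
    rw [lintegral_tsum hmeas]; exact hsum
  have h2 : ∀ᵐ ω ∂P, ∑' k, ENNReal.ofReal (Y k ω) ≠ ⊤ :=
    ae_lt_top' (AEMeasurable.ennreal_tsum hmeas) h1 |>.mono fun ω h => h.ne
  filter_upwards [h2] with ω hω
  have h3 : Tendsto (fun k => ENNReal.ofReal (Y k ω)) atTop (𝓝 0) :=
    ENNReal.tendsto_atTop_zero_of_tsum_ne_top hω
  have h4 : Tendsto (fun k => (ENNReal.ofReal (Y k ω)).toReal) atTop (𝓝 (0:ℝ≥0∞).toReal) :=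
    (ENNReal.tendsto_toReal (by simp)).comp h3
  simpa only [ENNReal.toReal_ofReal (h0 _ ω), ENNReal.toReal_zero] using h4

namespace ProbabilityTheory

lemma gauss_scale (v : ℝ≥0) :
    (gaussianReal 0 1).map (fun x => (Real.sqrt v) * x) = gaussianReal 0 v := by
  have h := gaussianReal_map_const_mul (μ := 0) (v := 1) (Real.sqrt v)
  have h2 : (⟨(Real.sqrt v)^2, sq_nonneg _⟩ : ℝ≥0) * 1 = v := by
    ext; simp [Real.sq_sqrt v.coe_nonneg]
  rw [mul_zero] at h
  convert h using 2
  ext; simp [Real.sq_sqrt v.coe_nonneg]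

lemma integrable_sq_gauss1 : Integrable (fun x : ℝ => x^2) (gaussianReal 0 1) := by
  rw [gaussianReal_of_var_ne_zero _ one_ne_zero,
    integrable_withDensity_iff (measurable_gaussianPDF _ _)
      (ae_of_all _ fun x => ENNReal.ofReal_lt_top)]
  have heq : ∀ x : ℝ, x^2 * ((gaussianPDF 0 1 x).toReal)
      = (Real.sqrt (2 * Real.pi))⁻¹ * (x ^ (2:ℝ) * Real.exp (-(2⁻¹ : ℝ) * x^2)) := by
    intro x
    rw [gaussianPDF, ENNReal.toReal_ofReal (gaussianPDFReal_nonneg _ _ _), gaussianPDFReal]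
    rw [show x ^ (2:ℝ) = x ^ 2 by rw [show (2:ℝ) = ((2:ℕ):ℝ) by norm_num, Real.rpow_natCast]]
    simp only [NNReal.coe_one, mul_one, sub_zero]
    rw [show -x^2/(2:ℝ) = -(2⁻¹:ℝ) * x^2 by ring]
    ring
  simp_rw [heq]
  exact (integrable_rpow_mul_exp_neg_mul_sq (by norm_num) (by norm_num)).const_mul _

lemma integrable_sq_gauss (v : ℝ≥0) : Integrable (fun x : ℝ => x^2) (gaussianReal 0 v) := by
  rw [← gauss_scale v]
  rw [integrable_map_measure (by fun_prop) (by fun_prop)]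
  have : ((fun x : ℝ => x^2) ∘ fun x => (Real.sqrt v) * x)
      = fun x => ((Real.sqrt v)^2) * x^2 := by funext x; simp [Function.comp, mul_pow]
  rw [this]
  exact integrable_sq_gauss1.const_mul _

lemma integrable_id_gauss (v : ℝ≥0) : Integrable (fun x : ℝ => x) (gaussianReal 0 v) := by
  have h := (integrable_sq_gauss v).add (integrable_const (1:ℝ))
  apply h.mono' measurable_id'.aestronglyMeasurable
  filter_upwards with x
  simp only [Pi.add_apply, Real.norm_eq_abs]
  nlinarith [sq_nonneg (|x| - 1), sq_abs x]

lemma integral_id_gauss1 : ∫ x, x ∂(gaussianReal 0 1) = 0 := by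
  have hmap : (gaussianReal 0 1).map (fun x => -x) = gaussianReal 0 1 := by
    have h := gaussianReal_map_const_mul (μ := 0) (v := 1) (-1 : ℝ)
    have h2 : (⟨(-1:ℝ)^2, sq_nonneg _⟩ : ℝ≥0) * 1 = 1 := by ext; norm_num
    simp only [neg_one_mul, mul_zero] at h
    convert h using 2 <;> ext <;> norm_num
  have : ∫ x, x ∂(gaussianReal 0 1) = ∫ x, -x ∂(gaussianReal 0 1) := by
    conv_lhs => rw [← hmap]
    rw [integral_map (by fun_prop) measurable_id'.aestronglyMeasurable]
  have h2 := integral_neg (μ := gaussianReal 0 1) (f := fun x : ℝ => x)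
  rw [h2] at this
  linarith

/-- second moment of the standard gaussian -/
noncomputable def gaussK : ℝ := ∫ x, x^2 ∂(gaussianReal 0 1)

lemma gaussK_nonneg : 0 ≤ gaussK := integral_nonneg fun x => sq_nonneg x

lemma integral_id_gauss (v : ℝ≥0) : ∫ x, x ∂(gaussianReal 0 v) = 0 := by
  rw [← gauss_scale v, integral_map (by fun_prop) measurable_id'.aestronglyMeasurable]
  simp_rw [integral_const_mul (μ := gaussianReal 0 1) (Real.sqrt v) (fun x : ℝ => x)]
  rw [integral_id_gauss1, mul_zero]

lemma integral_sq_gauss (v : ℝ≥0) : ∫ x, x^2 ∂(gaussianReal 0 v) = gaussK * v := by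
  rw [← gauss_scale v, integral_map (by fun_prop) (by fun_prop)]
  have : ∀ x : ℝ, ((Real.sqrt v) * x)^2 = (v:ℝ) * x^2 := by
    intro x; rw [mul_pow, Real.sq_sqrt v.coe_nonneg]
  simp_rw [this, integral_const_mul, gaussK]
  ring

end ProbabilityTheory

section KeyLimits
open ProbabilityTheory

variable {Ω : Type*} [mΩ : MeasurableSpace Ω]

set_option maxHeartbeats 1000000 in
lemma key_limits (P : Measure Ω) [IsProbabilityMeasure P] (W : ℕ → ℝ → Ω → ℝ)
    (hmeas : ∀ i s, Measurable (fun ω => W i s ω))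
    (hcont : ∀ i ω, Continuous fun s => W i s ω)
    (hlaw : ∀ i (s : ℝ), 0 ≤ s → P.map (fun ω => W i s ω) = gaussianReal 0 s.toNNReal)
    (hind : ∀ i j, i ≠ j → ∀ s : ℝ, IndepFun (fun ω => W i s ω) (fun ω => W j s ω) P)
    (t : ℝ) (ht : 0 ≤ t) :
    ∀ᵐ ω ∂P, Tendsto (fun N : ℕ => |∑ i ∈ Finset.Icc 1 N, W i t ω| / N) atTop (𝓝 0) ∧
      Tendsto (fun N : ℕ => (∫ s in Set.Ioc 0 t, |∑ i ∈ Finset.Icc 1 N, W i s ω|) / N)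
        atTop (𝓝 0) := by
  set S : ℕ → ℝ → Ω → ℝ := fun N s ω => ∑ i ∈ Finset.Icc 1 N, W i s ω with hS_def
  set G : ℕ → ℝ → Ω → ℝ := fun k s ω => ∑ i ∈ Finset.Ioc (k^2) ((k+1)^2), |W i s ω| with hG_def
  -- basic measurability / continuity
  have hSmeas : ∀ N s, Measurable (fun ω => S N s ω) := fun N s =>
    Finset.measurable_sum _ fun i _ => hmeas i s
  have hScont : ∀ N ω, Continuous fun s => S N s ω := fun N ω =>
    continuous_finset_sum _ fun i _ => hcont i ω
  have hGmeas : ∀ k s, Measurable (fun ω => G k s ω) := fun k s =>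
    Finset.measurable_sum _ fun i _ => (hmeas i s).abs
  have hGcont : ∀ k ω, Continuous fun s => G k s ω := fun k ω =>
    continuous_finset_sum _ fun i _ => (hcont i ω).abs
  -- moments of single variables
  have hInt1 : ∀ i (s : ℝ), 0 ≤ s → Integrable (fun ω => W i s ω) P := by
    intro i s hs
    have h := (integrable_map_measure measurable_id'.aestronglyMeasurable
      (hmeas i s).aemeasurable).mp (by rw [hlaw i s hs]; exact integrable_id_gauss _)
    simpa [Function.comp_def] using h
  have hInt2 : ∀ i (s : ℝ), 0 ≤ s → Integrable (fun ω => (W i s ω)^2) P := by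
    intro i s hs
    have h := (integrable_map_measure (g := fun x : ℝ => x^2) (by fun_prop)
      (hmeas i s).aemeasurable).mp (by rw [hlaw i s hs]; exact integrable_sq_gauss _)
    simpa [Function.comp_def] using h
  have hMean : ∀ i (s : ℝ), 0 ≤ s → ∫ ω, W i s ω ∂P = 0 := by
    intro i s hs
    have h := integral_map (μ := P) (φ := fun ω => W i s ω) (hmeas i s).aemeasurable
      (f := fun x : ℝ => x) measurable_id'.aestronglyMeasurable
    rw [hlaw i s hs, integral_id_gauss] at h
    exact h.symm
  have hSq : ∀ i (s : ℝ), 0 ≤ s → ∫ ω, (W i s ω)^2 ∂P = gaussK * s := by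
    intro i s hs
    have h := integral_map (μ := P) (φ := fun ω => W i s ω) (hmeas i s).aemeasurable
      (f := fun x : ℝ => x^2) (by fun_prop)
    rw [hlaw i s hs, integral_sq_gauss, Real.coe_toNNReal s hs] at h
    exact h.symm
  have hcrossInt : ∀ i j, i ≠ j → ∀ (s : ℝ), 0 ≤ s →
      Integrable (fun ω => W i s ω * W j s ω) P := by
    intro i j hij s hs
    exact (hind i j hij s).integrable_mul (hInt1 i s hs) (hInt1 j s hs)
  have hcross : ∀ i j, i ≠ j → ∀ (s : ℝ), 0 ≤ s →
      ∫ ω, W i s ω * W j s ω ∂P = 0 := by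
    intro i j hij s hs
    have h := (hind i j hij s).integral_mul_eq_mul_integral (hInt1 i s hs).1 (hInt1 j s hs).1
    simp only [hMean i s hs, hMean j s hs, mul_zero] at h
    exact h
  -- second moment of S
  have hSsq_eq : ∀ N (s : ℝ) (ω : Ω),
      (S N s ω)^2 = ∑ i ∈ Finset.Icc 1 N, ∑ j ∈ Finset.Icc 1 N, W i s ω * W j s ω := by
    intro N s ω
    rw [hS_def, sq, Finset.sum_mul_sum]
  have hIntS2 : ∀ N (s : ℝ), 0 ≤ s → Integrable (fun ω => (S N s ω)^2) P := by
    intro N s hs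
    simp only [hSsq_eq]
    apply integrable_finset_sum
    intro i _
    apply integrable_finset_sum
    intro j _
    by_cases hij : i = j
    · subst hij
      simpa [sq] using hInt2 i s hs
    · exact hcrossInt i j hij s hs
  have hES2 : ∀ N (s : ℝ), 0 ≤ s → ∫ ω, (S N s ω)^2 ∂P = gaussK * s * N := by
    intro N s hs
    simp only [hSsq_eq]
    rw [integral_finset_sum]
    swap
    · intro i _
      apply integrable_finset_sum
      intro j _
      by_cases hij : i = j
      · subst hij; simpa [sq] using hInt2 i s hs
      · exact hcrossInt i j hij s hs
    have hinner : ∀ i ∈ Finset.Icc 1 N,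
        ∫ ω, ∑ j ∈ Finset.Icc 1 N, W i s ω * W j s ω ∂P = gaussK * s := by
      intro i hi
      rw [integral_finset_sum]
      swap
      · intro j _
        by_cases hij : i = j
        · subst hij; simpa [sq] using hInt2 i s hs
        · exact hcrossInt i j hij s hs
      rw [Finset.sum_eq_single_of_mem i hi]
      · simp_rw [← pow_two]
        exact hSq i s hs
      · intro j _ hji
        exact hcross i j (fun h => hji h.symm) s hs
    rw [Finset.sum_congr rfl hinner, Finset.sum_const, Nat.card_Icc]
    simp [mul_comm]
  -- lintegral versions
  have hlintS2 : ∀ N (s : ℝ), 0 ≤ s →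
      ∫⁻ ω, ENNReal.ofReal ((S N s ω)^2) ∂P = ENNReal.ofReal (gaussK * s * N) := by
    intro N s hs
    rw [← ofReal_integral_eq_lintegral_ofReal (hIntS2 N s hs)
      (ae_of_all _ fun ω => sq_nonneg _), hES2 N s hs]
  have hlintG2 : ∀ k (s : ℝ), 0 ≤ s →
      ∫⁻ ω, ENNReal.ofReal ((G k s ω)^2) ∂P
        ≤ ENNReal.ofReal (gaussK * s * (3*(k+1))^2) := by
    intro k s hs
    have hcard : ((Finset.Ioc (k^2) ((k+1)^2)).card : ℝ) ≤ 3*(k+1) := by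
      rw [Nat.card_Ioc]
      push_cast
      have : ((k+1)^2 - k^2 : ℕ) = 2*k+1 := by ring_nf; omega
      rw [this]
      push_cast
      nlinarith [Nat.cast_nonneg (α := ℝ) k]
    have hpt : ∀ ω, (G k s ω)^2
        ≤ ((Finset.Ioc (k^2) ((k+1)^2)).card : ℝ) * ∑ i ∈ Finset.Ioc (k^2) ((k+1)^2), (W i s ω)^2 := by
      intro ω
      have h := Finset.sum_mul_sq_le_sq_mul_sq (Finset.Ioc (k^2) ((k+1)^2))
        (fun i => |W i s ω|) (fun _ => (1:ℝ))
      simp only [mul_one, one_pow, sq_abs, Finset.sum_const, nsmul_eq_mul] at h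
      rw [hG_def]
      calc (∑ i ∈ Finset.Ioc (k^2) ((k+1)^2), |W i s ω|)^2
          ≤ (∑ i ∈ Finset.Ioc (k^2) ((k+1)^2), (W i s ω)^2) *
            ((Finset.Ioc (k^2) ((k+1)^2)).card : ℝ) := h
        _ = _ := by ring
    calc ∫⁻ ω, ENNReal.ofReal ((G k s ω)^2) ∂P
        ≤ ∫⁻ ω, ENNReal.ofReal (((Finset.Ioc (k^2) ((k+1)^2)).card : ℝ)
            * ∑ i ∈ Finset.Ioc (k^2) ((k+1)^2), (W i s ω)^2) ∂P :=
          lintegral_mono fun ω => ENNReal.ofReal_le_ofReal (hpt ω)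
      _ = ENNReal.ofReal (((Finset.Ioc (k^2) ((k+1)^2)).card : ℝ)
            * ∑ i ∈ Finset.Ioc (k^2) ((k+1)^2), (gaussK * s)) := by
          rw [← ofReal_integral_eq_lintegral_ofReal]
          · congr 1
            rw [integral_const_mul, integral_finset_sum _ (fun i _ => hInt2 i s hs)]
            congr 1
            exact Finset.sum_congr rfl fun i _ => hSq i s hs
          · exact (integrable_finset_sum _ (fun i _ => hInt2 i s hs)).const_mul _
          · exact ae_of_all _ fun ω => mul_nonneg (Nat.cast_nonneg _)
              (Finset.sum_nonneg fun i _ => sq_nonneg _)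
      _ ≤ ENNReal.ofReal (gaussK * s * (3*(k+1))^2) := by
          apply ENNReal.ofReal_le_ofReal
          rw [Finset.sum_const, nsmul_eq_mul]
          have hg0 : 0 ≤ gaussK * s := mul_nonneg gaussK_nonneg hs
          have h1 : (0:ℝ) ≤ ((Finset.Ioc (k^2) ((k+1)^2)).card : ℝ) := Nat.cast_nonneg _
          have h2 : ((Finset.Ioc (k^2) ((k+1)^2)).card : ℝ) * (Finset.Ioc (k^2) ((k+1)^2)).card
              ≤ (3*((k:ℝ)+1))^2 := by nlinarith
          nlinarith [mul_le_mul_of_nonneg_right h2 hg0]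
  -- joint measurability
  have hWj : ∀ i, Measurable (Function.uncurry (fun s ω => W i s ω)) := fun i =>
    measurable_uncurry_of_continuous_of_measurable (fun ω => hcont i ω) (fun s => hmeas i s)
  have hSj : ∀ N, Measurable (fun p : ℝ × Ω => S N p.1 p.2) := by
    intro N
    simp only [hS_def]
    exact Finset.measurable_sum _ fun i _ => hWj i
  have hGj : ∀ k, Measurable (fun p : ℝ × Ω => G k p.1 p.2) := by
    intro k
    simp only [hG_def]
    exact Finset.measurable_sum _ fun i _ => (hWj i).abs
  have hswapS : ∀ N, ∫⁻ ω, ∫⁻ s in Set.Ioc 0 t, ENNReal.ofReal ((S N s ω)^2) ∂volume ∂P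
      = ∫⁻ s in Set.Ioc 0 t, ∫⁻ ω, ENNReal.ofReal ((S N s ω)^2) ∂P ∂volume := by
    intro N
    exact lintegral_lintegral_swap
      (((hSj N).comp measurable_swap).pow_const 2).ennreal_ofReal.aemeasurable
  have hswapG : ∀ k, ∫⁻ ω, ∫⁻ s in Set.Ioc 0 t, ENNReal.ofReal ((G k s ω)^2) ∂volume ∂P
      = ∫⁻ s in Set.Ioc 0 t, ∫⁻ ω, ENNReal.ofReal ((G k s ω)^2) ∂P ∂volume := by
    intro k
    exact lintegral_lintegral_swap
      (((hGj k).comp measurable_swap).pow_const 2).ennreal_ofReal.aemeasurable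
  have hQbound : ∀ N : ℕ, ∫⁻ ω, ENNReal.ofReal (∫ s in Set.Ioc 0 t, (S N s ω)^2) ∂P
      ≤ ENNReal.ofReal (gaussK * t * N * t) := by
    intro N
    have h1 : ∀ ω : Ω, ENNReal.ofReal (∫ s in Set.Ioc 0 t, (S N s ω)^2)
        = ∫⁻ s in Set.Ioc 0 t, ENNReal.ofReal ((S N s ω)^2) := fun ω =>
      ofReal_integral_eq_lintegral_ofReal ((hScont N ω).pow 2).integrableOn_Ioc
        (ae_of_all _ fun s => sq_nonneg _)
    simp_rw [h1]
    rw [hswapS N]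
    have hc0 : (0:ℝ) ≤ gaussK * t * N :=
      mul_nonneg (mul_nonneg gaussK_nonneg ht) (Nat.cast_nonneg N)
    calc ∫⁻ s in Set.Ioc 0 t, ∫⁻ ω, ENNReal.ofReal ((S N s ω)^2) ∂P ∂volume
        ≤ ∫⁻ _ in Set.Ioc 0 t, ENNReal.ofReal (gaussK * t * N) ∂volume := by
          apply lintegral_mono_ae
          filter_upwards [ae_restrict_mem measurableSet_Ioc] with s hs
          rw [hlintS2 N s hs.1.le]
          apply ENNReal.ofReal_le_ofReal
          exact mul_le_mul_of_nonneg_right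
            (mul_le_mul_of_nonneg_left hs.2 gaussK_nonneg) (Nat.cast_nonneg N)
      _ = ENNReal.ofReal (gaussK * t * N) * volume (Set.Ioc 0 t) := setLIntegral_const _ _
      _ ≤ ENNReal.ofReal (gaussK * t * N * t) := by
          rw [Real.volume_Ioc, sub_zero, ← ENNReal.ofReal_mul hc0]
  have hVbound : ∀ k : ℕ, ∫⁻ ω, ENNReal.ofReal (∫ s in Set.Ioc 0 t, (G k s ω)^2) ∂P
      ≤ ENNReal.ofReal (gaussK * t * (3*(k+1))^2 * t) := by
    intro k
    have h1 : ∀ ω : Ω, ENNReal.ofReal (∫ s in Set.Ioc 0 t, (G k s ω)^2)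
        = ∫⁻ s in Set.Ioc 0 t, ENNReal.ofReal ((G k s ω)^2) := fun ω =>
      ofReal_integral_eq_lintegral_ofReal ((hGcont k ω).pow 2).integrableOn_Ioc
        (ae_of_all _ fun s => sq_nonneg _)
    simp_rw [h1]
    rw [hswapG k]
    have hc0 : (0:ℝ) ≤ gaussK * t * (3*((k:ℝ)+1))^2 :=
      mul_nonneg (mul_nonneg gaussK_nonneg ht) (sq_nonneg _)
    calc ∫⁻ s in Set.Ioc 0 t, ∫⁻ ω, ENNReal.ofReal ((G k s ω)^2) ∂P ∂volume
        ≤ ∫⁻ _ in Set.Ioc 0 t, ENNReal.ofReal (gaussK * t * (3*(k+1))^2) ∂volume := by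
          apply lintegral_mono_ae
          filter_upwards [ae_restrict_mem measurableSet_Ioc] with s hs
          refine le_trans (hlintG2 k s hs.1.le) (ENNReal.ofReal_le_ofReal ?_)
          exact mul_le_mul_of_nonneg_right
            (mul_le_mul_of_nonneg_left hs.2 gaussK_nonneg) (sq_nonneg _)
      _ = ENNReal.ofReal (gaussK * t * (3*(k+1))^2) * volume (Set.Ioc 0 t) :=
          setLIntegral_const _ _
      _ ≤ ENNReal.ofReal (gaussK * t * (3*(k+1))^2 * t) := by
          rw [Real.volume_Ioc, sub_zero, ← ENNReal.ofReal_mul hc0]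
  -- summability helper
  have hsum2 : Summable (fun k : ℕ => (1:ℝ)/((k+1:ℕ):ℝ)^2) := by
    have h := (summable_nat_add_iff (f := fun n : ℕ => (1:ℝ)/(n:ℝ)^2) 1).2
      (Real.summable_one_div_nat_pow.2 one_lt_two)
    exact h
  have key : ∀ (X : ℕ → Ω → ℝ) (C : ℝ), 0 ≤ C → (∀ k ω, 0 ≤ X k ω) →
      (∀ k, AEMeasurable (fun ω => ENNReal.ofReal (X k ω)) P) →
      (∀ k, ∫⁻ ω, ENNReal.ofReal (X k ω) ∂P ≤ ENNReal.ofReal (C * ((k+1:ℕ):ℝ)^2)) →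
      ∀ᵐ ω ∂P, Tendsto (fun k => X k ω / ((k+1:ℕ):ℝ)^4) atTop (𝓝 0) := by
    intro X C hC h0 hm hb
    have e1 : ∀ k (ω : Ω), ENNReal.ofReal (X k ω / ((k+1:ℕ):ℝ)^4)
        = ENNReal.ofReal (X k ω) * ENNReal.ofReal ((((k+1:ℕ):ℝ)^4)⁻¹) := fun k ω => by
      rw [div_eq_mul_inv, ENNReal.ofReal_mul (h0 k ω)]
    apply ae_tendsto_of_summable P _ (fun k ω => div_nonneg (h0 k ω) (by positivity))
    · intro k
      simp_rw [e1]
      exact (hm k).mul_const _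
    · have hle : ∀ k, ∫⁻ ω, ENNReal.ofReal (X k ω / ((k+1:ℕ):ℝ)^4) ∂P
          ≤ ENNReal.ofReal (C / ((k+1:ℕ):ℝ)^2) := by
        intro k
        simp_rw [e1]
        rw [lintegral_mul_const'' _ (hm k)]
        calc (∫⁻ ω, ENNReal.ofReal (X k ω) ∂P) * ENNReal.ofReal ((((k+1:ℕ):ℝ)^4)⁻¹)
            ≤ ENNReal.ofReal (C * ((k+1:ℕ):ℝ)^2) * ENNReal.ofReal ((((k+1:ℕ):ℝ)^4)⁻¹) :=
              mul_le_mul_left (hb k) _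
          _ = ENNReal.ofReal (C / ((k+1:ℕ):ℝ)^2) := by
              rw [← ENNReal.ofReal_mul (mul_nonneg hC (by positivity))]
              congr 1
              have hk0 : ((k+1:ℕ):ℝ) ≠ 0 := by positivity
              field_simp
      refine ne_top_of_le_ne_top ?_ (ENNReal.tsum_le_tsum hle)
      have hsum3 : Summable (fun k : ℕ => C / ((k+1:ℕ):ℝ)^2) := by
        have h := hsum2.mul_left C
        simpa [mul_one_div, div_eq_mul_inv] using h
      rw [← ENNReal.ofReal_tsum_of_nonneg (fun k => div_nonneg hC (by positivity)) hsum3]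
      exact ENNReal.ofReal_ne_top
  -- the four almost sure limits
  have h1 := key (fun k ω => (S ((k+1)^2) t ω)^2) (gaussK * t)
    (mul_nonneg gaussK_nonneg ht) (fun k ω => sq_nonneg _)
    (fun k => ((hSmeas _ t).pow_const 2).ennreal_ofReal.aemeasurable)
    (by
      intro k
      rw [hlintS2 _ t ht]
      apply ENNReal.ofReal_le_ofReal
      apply le_of_eq
      push_cast
      ring)
  have h2 := key (fun k ω => (G (k+1) t ω)^2) (36 * (gaussK * t))
    (by nlinarith [mul_nonneg gaussK_nonneg ht]) (fun k ω => sq_nonneg _)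
    (fun k => ((hGmeas _ t).pow_const 2).ennreal_ofReal.aemeasurable)
    (by
      intro k
      refine le_trans (hlintG2 (k+1) t ht) (ENNReal.ofReal_le_ofReal ?_)
      push_cast
      have h := mul_nonneg gaussK_nonneg ht
      have hsq : (3*((k:ℝ)+1+1))^2 ≤ 36*((k:ℝ)+1)^2 := by
        nlinarith [Nat.cast_nonneg (α := ℝ) k]
      nlinarith [mul_le_mul_of_nonneg_left hsq h])
  have hmeasQ : ∀ N, Measurable (fun ω => ∫ s in Set.Ioc 0 t, (S N s ω)^2) := by
    intro N
    have h := (((hSj N).comp measurable_swap).pow_const 2).stronglyMeasurable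
    exact (h.integral_prod_right' (ν := volume.restrict (Set.Ioc 0 t))).measurable
  have hmeasV : ∀ k, Measurable (fun ω => ∫ s in Set.Ioc 0 t, (G k s ω)^2) := by
    intro k
    have h := (((hGj k).comp measurable_swap).pow_const 2).stronglyMeasurable
    exact (h.integral_prod_right' (ν := volume.restrict (Set.Ioc 0 t))).measurable
  have h3 := key (fun k ω => ∫ s in Set.Ioc 0 t, (S ((k+1)^2) s ω)^2) (gaussK * t * t)
    (mul_nonneg (mul_nonneg gaussK_nonneg ht) ht)
    (fun k ω => integral_nonneg fun s => sq_nonneg _)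
    (fun k => ((hmeasQ _).ennreal_ofReal).aemeasurable)
    (by
      intro k
      refine le_trans (hQbound ((k+1)^2)) (ENNReal.ofReal_le_ofReal ?_)
      push_cast
      apply le_of_eq
      ring)
  have h4 := key (fun k ω => ∫ s in Set.Ioc 0 t, (G (k+1) s ω)^2) (36 * (gaussK * t * t))
    (by nlinarith [mul_nonneg (mul_nonneg gaussK_nonneg ht) ht])
    (fun k ω => integral_nonneg fun s => sq_nonneg _)
    (fun k => ((hmeasV _).ennreal_ofReal).aemeasurable)
    (by
      intro k
      refine le_trans (hVbound (k+1)) (ENNReal.ofReal_le_ofReal ?_)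
      push_cast
      have h := mul_nonneg (mul_nonneg gaussK_nonneg ht) ht
      have hsq : (3*((k:ℝ)+1+1))^2 ≤ 36*((k:ℝ)+1)^2 := by
        nlinarith [Nat.cast_nonneg (α := ℝ) k]
      nlinarith [mul_le_mul_of_nonneg_left hsq h])
  -- pathwise conclusion
  filter_upwards [h1, h2, h3, h4] with ω hω1 hω2 hω3 hω4
  have hGnonneg : ∀ k (s : ℝ), 0 ≤ G k s ω := fun k s =>
    Finset.sum_nonneg fun i _ => abs_nonneg _
  have hsub : ∀ N, 1 ≤ N → ∀ s : ℝ,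
      |S N s ω| ≤ |S ((Nat.sqrt N)^2) s ω| + G (Nat.sqrt N) s ω := by
    intro N hN s
    have hk2 : (Nat.sqrt N)^2 ≤ N := Nat.sqrt_le' N
    have hN2 : N ≤ (Nat.sqrt N + 1)^2 := (Nat.lt_succ_sqrt' N).le
    have h01 : ∀ m : ℕ, Finset.Icc 1 m = Finset.Ioc 0 m := by
      intro m; ext x; simp [Nat.lt_iff_add_one_le]
    have hsplit : S N s ω = S ((Nat.sqrt N)^2) s ω
        + ∑ i ∈ Finset.Ioc ((Nat.sqrt N)^2) N, W i s ω := by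
      simp only [hS_def, h01]
      rw [← Finset.sum_Ioc_consecutive _ (Nat.zero_le ((Nat.sqrt N)^2)) hk2]
    rw [hsplit]
    have ha : |∑ i ∈ Finset.Ioc ((Nat.sqrt N)^2) N, W i s ω|
        ≤ ∑ i ∈ Finset.Ioc ((Nat.sqrt N)^2) N, |W i s ω| := Finset.abs_sum_le_sum_abs _ _
    have hb' : ∑ i ∈ Finset.Ioc ((Nat.sqrt N)^2) N, |W i s ω|
        ≤ ∑ i ∈ Finset.Ioc ((Nat.sqrt N)^2) ((Nat.sqrt N + 1)^2), |W i s ω| :=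
      Finset.sum_le_sum_of_subset_of_nonneg (Finset.Ioc_subset_Ioc le_rfl hN2)
        (fun i _ _ => abs_nonneg _)
    calc |S ((Nat.sqrt N)^2) s ω + ∑ i ∈ Finset.Ioc ((Nat.sqrt N)^2) N, W i s ω|
        ≤ |S ((Nat.sqrt N)^2) s ω| + |∑ i ∈ Finset.Ioc ((Nat.sqrt N)^2) N, W i s ω| :=
          abs_add_le _ _
      _ ≤ |S ((Nat.sqrt N)^2) s ω| + G (Nat.sqrt N) s ω := by
          simp only [hG_def]; linarith
  have hsqrt_tendsto : Tendsto (fun N : ℕ => Nat.sqrt N - 1) atTop atTop := by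
    apply tendsto_atTop_atTop.2
    intro b
    refine ⟨(b+1)^2, fun N hN => ?_⟩
    have h := Nat.le_sqrt.2 (le_trans (le_of_eq (pow_two (b+1)).symm) hN)
    omega
  have goalA : Tendsto (fun N : ℕ => |S N t ω| / N) atTop (𝓝 0) := by
    have l1 : Tendsto (fun k : ℕ => Real.sqrt ((S ((k+1)^2) t ω)^2 / ((k+1:ℕ):ℝ)^4))
        atTop (𝓝 0) := by
      have h := (Real.continuous_sqrt.tendsto 0).comp hω1
      simpa [Real.sqrt_zero, Function.comp_def] using h
    have l2 : Tendsto (fun k : ℕ => Real.sqrt ((G (k+1) t ω)^2 / ((k+1:ℕ):ℝ)^4))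
        atTop (𝓝 0) := by
      have h := (Real.continuous_sqrt.tendsto 0).comp hω2
      simpa [Real.sqrt_zero, Function.comp_def] using h
    have hcomp := (l1.comp hsqrt_tendsto).add (l2.comp hsqrt_tendsto)
    rw [add_zero] at hcomp
    apply tendsto_of_tendsto_of_tendsto_of_le_of_le' tendsto_const_nhds hcomp
    · exact Eventually.of_forall fun N => div_nonneg (abs_nonneg _) (Nat.cast_nonneg _)
    · filter_upwards [eventually_ge_atTop 1] with N hN
      have hk1 : 1 ≤ Nat.sqrt N := Nat.le_sqrt.2 (by simpa using hN)
      have hk11 : Nat.sqrt N - 1 + 1 = Nat.sqrt N := Nat.succ_pred_eq_of_pos hk1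
      have hk1R : (1:ℝ) ≤ (Nat.sqrt N : ℝ) := by exact_mod_cast hk1
      have hk2R : ((Nat.sqrt N : ℝ))^2 ≤ (N:ℝ) := by exact_mod_cast Nat.sqrt_le' N
      have hkpos : (0:ℝ) < ((Nat.sqrt N : ℝ))^2 := by nlinarith
      have hstep : |S N t ω| / N
          ≤ (|S ((Nat.sqrt N)^2) t ω| + G (Nat.sqrt N) t ω) / ((Nat.sqrt N : ℝ))^2 :=
        div_le_div₀ (add_nonneg (abs_nonneg _) (hGnonneg _ _)) (by
            have h := hsub N hN t
            calc |S N t ω| ≤ _ := h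
              _ = _ := by push_cast; ring_nf) hkpos hk2R
      have e1 : Real.sqrt ((S ((Nat.sqrt N)^2) t ω)^2 / ((Nat.sqrt N : ℝ))^4)
          = |S ((Nat.sqrt N)^2) t ω| / ((Nat.sqrt N : ℝ))^2 := by
        rw [Real.sqrt_div (sq_nonneg _), Real.sqrt_sq_eq_abs,
          show ((Nat.sqrt N : ℝ))^4 = (((Nat.sqrt N : ℝ))^2)^2 by ring,
          Real.sqrt_sq (by positivity)]
      have e2 : Real.sqrt ((G (Nat.sqrt N) t ω)^2 / ((Nat.sqrt N : ℝ))^4)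
          = G (Nat.sqrt N) t ω / ((Nat.sqrt N : ℝ))^2 := by
        rw [Real.sqrt_div (sq_nonneg _), Real.sqrt_sq_eq_abs,
          show ((Nat.sqrt N : ℝ))^4 = (((Nat.sqrt N : ℝ))^2)^2 by ring,
          Real.sqrt_sq (by positivity), abs_of_nonneg (hGnonneg _ _)]
      show |S N t ω| / N ≤ Real.sqrt ((S ((Nat.sqrt N - 1 + 1)^2) t ω)^2
          / ((Nat.sqrt N - 1 + 1:ℕ):ℝ)^4)
        + Real.sqrt ((G (Nat.sqrt N - 1 + 1) t ω)^2 / ((Nat.sqrt N - 1 + 1:ℕ):ℝ)^4)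
      rw [hk11, e1, e2]
      calc |S N t ω| / N
          ≤ (|S ((Nat.sqrt N)^2) t ω| + G (Nat.sqrt N) t ω) / ((Nat.sqrt N : ℝ))^2 := hstep
        _ = _ := by ring
  have hQtend : Tendsto (fun N : ℕ =>
      (∫ s in Set.Ioc 0 t, (S N s ω)^2) / ((N:ℝ))^2) atTop (𝓝 0) := by
    have hcomp := ((hω3.const_mul 2).comp hsqrt_tendsto).add ((hω4.const_mul 2).comp hsqrt_tendsto)
    rw [mul_zero, add_zero] at hcomp
    apply tendsto_of_tendsto_of_tendsto_of_le_of_le' tendsto_const_nhds hcomp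
    · exact Eventually.of_forall fun N =>
        div_nonneg (integral_nonneg fun s => sq_nonneg _) (by positivity)
    · filter_upwards [eventually_ge_atTop 1] with N hN
      have hk1 : 1 ≤ Nat.sqrt N := Nat.le_sqrt.2 (by simpa using hN)
      have hk11 : Nat.sqrt N - 1 + 1 = Nat.sqrt N := Nat.succ_pred_eq_of_pos hk1
      have hk1R : (1:ℝ) ≤ (Nat.sqrt N : ℝ) := by exact_mod_cast hk1
      have hk2R : ((Nat.sqrt N : ℝ))^2 ≤ (N:ℝ) := by exact_mod_cast Nat.sqrt_le' N
      have hpt : ∀ s : ℝ, (S N s ω)^2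
          ≤ 2*(S ((Nat.sqrt N)^2) s ω)^2 + 2*(G (Nat.sqrt N) s ω)^2 := by
        intro s
        have h := hsub N hN s
        have h2 : (S N s ω)^2 ≤ (|S ((Nat.sqrt N)^2) s ω| + G (Nat.sqrt N) s ω)^2 := by
          rw [← sq_abs (S N s ω)]
          exact pow_le_pow_left₀ (abs_nonneg _) h 2
        have h3 := sq_nonneg (|S ((Nat.sqrt N)^2) s ω| - G (Nat.sqrt N) s ω)
        rw [← sq_abs (S ((Nat.sqrt N)^2) s ω)]
        nlinarith [h2, h3]
      have hQle : (∫ s in Set.Ioc 0 t, (S N s ω)^2)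
          ≤ 2*(∫ s in Set.Ioc 0 t, (S ((Nat.sqrt N)^2) s ω)^2)
            + 2*(∫ s in Set.Ioc 0 t, (G (Nat.sqrt N) s ω)^2) := by
        have hi1 : IntegrableOn (fun s => 2*(S ((Nat.sqrt N)^2) s ω)^2
            + 2*(G (Nat.sqrt N) s ω)^2) (Set.Ioc 0 t) volume :=
          ((continuous_const.mul ((hScont _ ω).pow 2)).add
            (continuous_const.mul ((hGcont _ ω).pow 2))).integrableOn_Ioc
        calc (∫ s in Set.Ioc 0 t, (S N s ω)^2)
            ≤ ∫ s in Set.Ioc 0 t, (2*(S ((Nat.sqrt N)^2) s ω)^2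
                + 2*(G (Nat.sqrt N) s ω)^2) := by
              apply setIntegral_mono_on ((hScont N ω).pow 2).integrableOn_Ioc hi1
                measurableSet_Ioc
              exact fun s _ => hpt s
          _ = _ := by
              rw [integral_add (f := fun s => 2*(S ((Nat.sqrt N)^2) s ω)^2)
                  (g := fun s => 2*(G (Nat.sqrt N) s ω)^2) ((show Continuous fun s => 2*(S ((Nat.sqrt N)^2) s ω)^2 from continuous_const.mul ((hScont _ ω).pow 2)).integrableOn_Ioc)
                ((show Continuous fun s => 2*(G (Nat.sqrt N) s ω)^2 from continuous_const.mul ((hGcont _ ω).pow 2)).integrableOn_Ioc),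
                integral_const_mul, integral_const_mul]
      have hkpos : (0:ℝ) < ((Nat.sqrt N : ℝ))^4 := pow_pos (by linarith : (0:ℝ) < (Nat.sqrt N : ℝ)) 4
      have hk4 : ((Nat.sqrt N : ℝ))^4 ≤ ((N:ℝ))^2 := by
        nlinarith [pow_le_pow_left₀ (sq_nonneg ((Nat.sqrt N : ℝ))) hk2R 2]
      have hstep : (∫ s in Set.Ioc 0 t, (S N s ω)^2) / ((N:ℝ))^2
          ≤ (2*(∫ s in Set.Ioc 0 t, (S ((Nat.sqrt N)^2) s ω)^2)
            + 2*(∫ s in Set.Ioc 0 t, (G (Nat.sqrt N) s ω)^2)) / ((Nat.sqrt N : ℝ))^4 :=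
        div_le_div₀ (add_nonneg
          (mul_nonneg two_pos.le (integral_nonneg fun s => sq_nonneg _))
          (mul_nonneg two_pos.le (integral_nonneg fun s => sq_nonneg _))) hQle hkpos hk4
      show (∫ s in Set.Ioc 0 t, (S N s ω)^2) / ((N:ℝ))^2
          ≤ 2*((∫ s in Set.Ioc 0 t, (S ((Nat.sqrt N - 1 + 1)^2) s ω)^2)
              / ((Nat.sqrt N - 1 + 1:ℕ):ℝ)^4)
            + 2*((∫ s in Set.Ioc 0 t, (G (Nat.sqrt N - 1 + 1) s ω)^2)
              / ((Nat.sqrt N - 1 + 1:ℕ):ℝ)^4)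
      rw [hk11]
      calc (∫ s in Set.Ioc 0 t, (S N s ω)^2) / ((N:ℝ))^2 ≤ _ := hstep
        _ = _ := by ring
  refine ⟨goalA, ?_⟩
  rw [Metric.tendsto_atTop]
  intro δ hδ
  have ht1 : (0:ℝ) < t + 1 := by linarith
  set ε := δ/(2*(t+1)) with hεdef
  have hε : (0:ℝ) < ε := by positivity
  obtain ⟨M, hM⟩ := (Metric.tendsto_atTop.1 hQtend) (ε*δ) (by positivity)
  refine ⟨max M 1, fun N hN => ?_⟩
  have hN1 : 1 ≤ N := le_trans (le_max_right M 1) hN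
  have hNM : M ≤ N := le_trans (le_max_left M 1) hN
  have hNpos : (0:ℝ) < (N:ℝ) := by exact_mod_cast Nat.pos_of_ne_zero (by omega)
  set q := (∫ s in Set.Ioc 0 t, (S N s ω)^2)/((N:ℝ))^2 with hq
  have hq0 : (0:ℝ) ≤ q := div_nonneg (integral_nonneg fun s => sq_nonneg _) (by positivity)
  have hqlt : q < ε*δ := by
    have h := hM N hNM
    rwa [Real.dist_eq, sub_zero, abs_of_nonneg hq0] at h
  have hRle : (∫ s in Set.Ioc 0 t, |S N s ω|)/(N:ℝ) ≤ (ε*t + q/ε)/2 := by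
    have hpt : ∀ s : ℝ, |S N s ω|/(N:ℝ) ≤ (ε + ((S N s ω)/N)^2/ε)/2 := by
      intro s
      have h2 : ((S N s ω)/(N:ℝ))^2 = (|S N s ω|/(N:ℝ))^2 := by
        rw [div_pow, div_pow, sq_abs]
      rw [h2]
      set y := |S N s ω|/(N:ℝ) with hy
      have h3 : (0:ℝ) ≤ y := div_nonneg (abs_nonneg _) hNpos.le
      have key2 : 2*ε*y ≤ ε^2 + y^2 := by nlinarith [sq_nonneg (y - ε)]
      calc y = (2*ε*y)/(2*ε) := by field_simp
        _ ≤ (ε^2 + y^2)/(2*ε) := (div_le_div_iff_of_pos_right (by positivity)).2 key2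
        _ = (ε + y^2/ε)/2 := by field_simp
    have hc1 : Continuous (fun s : ℝ => (ε + ((S N s ω)/(N:ℝ))^2/ε)/2) := by
      apply Continuous.div_const
      apply continuous_const.add
      exact (((hScont N ω).div_const _).pow 2).div_const _
    calc (∫ s in Set.Ioc 0 t, |S N s ω|)/(N:ℝ)
        = ∫ s in Set.Ioc 0 t, |S N s ω|/(N:ℝ) := (integral_div _ _).symm
      _ ≤ ∫ s in Set.Ioc 0 t, (ε + ((S N s ω)/(N:ℝ))^2/ε)/2 := by
          apply setIntegral_mono_on ((hScont N ω).abs.div_const _).integrableOn_Ioc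
            hc1.integrableOn_Ioc measurableSet_Ioc
          exact fun s _ => hpt s
      _ = ((∫ s in Set.Ioc 0 t, (ε + ((S N s ω)/(N:ℝ))^2/ε)))/2 := integral_div _ _
      _ = (ε*t + q/ε)/2 := by
          congr 1
          rw [integral_add (f := fun _ => ε) (g := fun s => ((S N s ω)/(N:ℝ))^2/ε)
              (continuous_const.integrableOn_Ioc)
            ((show Continuous (fun s => ((S N s ω)/(N:ℝ))^2/ε) from (((hScont N ω).div_const _).pow 2).div_const _).integrableOn_Ioc)]
          rw [setIntegral_const, Real.volume_real_Ioc_of_le ht, sub_zero,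
            smul_eq_mul, mul_comm]
          congr 1
          rw [integral_div]
          congr 1
          rw [hq]
          simp_rw [div_pow]
          rw [integral_div]
  have h1 : ε*(t+1) = δ/2 := by rw [hεdef]; field_simp
  have h2 : q/ε < δ := by
    rw [div_lt_iff₀ hε]
    calc q < ε*δ := hqlt
      _ = δ*ε := by ring
  rw [Real.dist_eq, sub_zero,
    abs_of_nonneg (div_nonneg (integral_nonneg fun s => abs_nonneg _) hNpos.le)]
  have h3 : ε*t < δ/2 := by nlinarith
  linarith

end KeyLimits

set_option maxHeartbeats 1000000 in
/-- pathwise Gronwall bound and almost sure convergence for the linear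
example: the `(N+1)`-player equilibrium state processes converge to the limiting ones,
with the explicit pathwise bound `e^{Kt}(D/N) max_{0≤s≤t}|∑_{i=1}^N W^i_s|`. -/
theorem linear_example_convergence
    {Ω : Type*} [mΩ : MeasurableSpace Ω] (P : Measure Ω) [IsProbabilityMeasure P]
    (T : ℝ) (hT : 0 < T) (a b c D0 D : ℝ) (hD : 0 ≤ D) (x00 x0 : ℝ)
    (F : ℝ → MeasurableSpace Ω)
    (hFmono : ∀ s t : ℝ, s ≤ t → F s ≤ F t) (hFle : ∀ t, F t ≤ mΩ)
    (W : ℕ → ℝ → Ω → ℝ) (hBM : ∀ i, IsBM P F (W i))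
    (hindep : iIndepFun
      (fun i ω t => W i t ω) P)
    -- the common linear feedback (coming from the common Riccati solution)
    (S00 S01 : ℝ → ℝ) (hS00 : Continuous S00) (hS01 : Continuous S01)
    (X0N XN : ℕ → ℝ → Ω → ℝ) (X0 Xb : ℝ → Ω → ℝ)
    (hcontN : ∀ N ω, Continuous (fun t => X0N N t ω) ∧ Continuous (fun t => XN N t ω))
    (hcont : ∀ ω, Continuous (fun t => X0 t ω) ∧ Continuous (fun t => Xb t ω))
    -- finite-player optimally controlled system
    (hfin : ∀ N : ℕ, 1 ≤ N → ∀ᵐ ω ∂P, ∀ t ∈ Set.Icc (0:ℝ) T,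
      X0N N t ω = x00 + (∫ s in Set.Ioc 0 t,
          (a * XN N s ω - b ^ 2 / 2 * (S00 s * X0N N s ω + S01 s * XN N s ω)))
        + D0 * W 0 t ω ∧
      XN N t ω = x0 + (∫ s in Set.Ioc 0 t, c * X0N N s ω)
        + (D / N) * ∑ i ∈ Finset.Icc 1 N, W i t ω)
    -- limiting system with the same feedback, driven by `W⁰` only
    (hlim : ∀ᵐ ω ∂P, ∀ t ∈ Set.Icc (0:ℝ) T,
      X0 t ω = x00 + (∫ s in Set.Ioc 0 t,
          (a * Xb s ω - b ^ 2 / 2 * (S00 s * X0 s ω + S01 s * Xb s ω)))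
        + D0 * W 0 t ω ∧
      Xb t ω = x0 + (∫ s in Set.Ioc 0 t, c * X0 s ω)) :
    (∃ K : ℝ, ∀ N : ℕ, 1 ≤ N → ∀ᵐ ω ∂P, ∀ t ∈ Set.Icc (0:ℝ) T,
      |X0N N t ω - X0 t ω| + |XN N t ω - Xb t ω| ≤
        Real.exp (K * t) * (D / N) *
          ⨆ s : Set.Icc (0:ℝ) t, |∑ i ∈ Finset.Icc 1 N, W i s.1 ω|) ∧
    ∀ t ∈ Set.Icc (0:ℝ) T, ∀ᵐ ω ∂P,
      Tendsto (fun N => X0N N t ω) atTop (𝓝 (X0 t ω)) ∧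
      Tendsto (fun N => XN N t ω) atTop (𝓝 (Xb t ω)) := by
  obtain ⟨C0, hC0⟩ := (isCompact_Icc (a := (0:ℝ)) (b := T)).exists_bound_of_continuousOn
    hS00.continuousOn
  obtain ⟨C1, hC1⟩ := (isCompact_Icc (a := (0:ℝ)) (b := T)).exists_bound_of_continuousOn
    hS01.continuousOn
  simp only [Real.norm_eq_abs] at hC0 hC1
  have hC0nn : 0 ≤ C0 := le_trans (abs_nonneg _) (hC0 0 ⟨le_rfl, hT.le⟩)
  have hC1nn : 0 ≤ C1 := le_trans (abs_nonneg _) (hC1 0 ⟨le_rfl, hT.le⟩)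
  set K1 : ℝ := |a| + b^2/2*(C0 + C1) with hK1_def
  have hK1nn : 0 ≤ K1 := by positivity
  set K : ℝ := K1 + |c| + 1 with hK_def
  have hKpos : (0:ℝ) < K := by positivity
  -- the core pathwise integral inequality
  have core : ∀ N : ℕ, 1 ≤ N → ∀ ω : Ω,
      (∀ u ∈ Set.Icc (0:ℝ) T,
        X0N N u ω = x00 + (∫ s in Set.Ioc 0 u,
            (a * XN N s ω - b ^ 2 / 2 * (S00 s * X0N N s ω + S01 s * XN N s ω)))
          + D0 * W 0 u ω ∧
        XN N u ω = x0 + (∫ s in Set.Ioc 0 u, c * X0N N s ω)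
          + (D / N) * ∑ i ∈ Finset.Icc 1 N, W i u ω) →
      (∀ u ∈ Set.Icc (0:ℝ) T,
        X0 u ω = x00 + (∫ s in Set.Ioc 0 u,
            (a * Xb s ω - b ^ 2 / 2 * (S00 s * X0 s ω + S01 s * Xb s ω)))
          + D0 * W 0 u ω ∧
        Xb u ω = x0 + (∫ s in Set.Ioc 0 u, c * X0 s ω)) →
      ∀ u ∈ Set.Icc (0:ℝ) T,
        |X0N N u ω - X0 u ω| + |XN N u ω - Xb u ω|
          ≤ (D/N) * |∑ i ∈ Finset.Icc 1 N, W i u ω|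
            + K * ∫ s in Set.Ioc 0 u,
                (|X0N N s ω - X0 s ω| + |XN N s ω - Xb s ω|) := by
    intro N hN ω hfinω hlimω u hu
    obtain ⟨hf1, hf2⟩ := hfinω u hu
    obtain ⟨hl1, hl2⟩ := hlimω u hu
    have hc1 : Continuous fun s =>
        a * XN N s ω - b ^ 2 / 2 * (S00 s * X0N N s ω + S01 s * XN N s ω) :=
      (continuous_const.mul (hcontN N ω).2).sub (continuous_const.mul
        ((hS00.mul (hcontN N ω).1).add (hS01.mul (hcontN N ω).2)))
    have hc2 : Continuous fun s =>
        a * Xb s ω - b ^ 2 / 2 * (S00 s * X0 s ω + S01 s * Xb s ω) :=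
      (continuous_const.mul (hcont ω).2).sub (continuous_const.mul
        ((hS00.mul (hcont ω).1).add (hS01.mul (hcont ω).2)))
    have hc3 : Continuous fun s => c * X0N N s ω := continuous_const.mul (hcontN N ω).1
    have hc4 : Continuous fun s => c * X0 s ω := continuous_const.mul (hcont ω).1
    have hfcont : Continuous fun s => X0N N s ω - X0 s ω := (hcontN N ω).1.sub (hcont ω).1
    have hgcont : Continuous fun s => XN N s ω - Xb s ω := (hcontN N ω).2.sub (hcont ω).2
    have hZcont : Continuous fun s => |X0N N s ω - X0 s ω| + |XN N s ω - Xb s ω| :=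
      hfcont.abs.add hgcont.abs
    have heqf : X0N N u ω - X0 u ω = ∫ s in Set.Ioc 0 u,
        ((a * XN N s ω - b ^ 2 / 2 * (S00 s * X0N N s ω + S01 s * XN N s ω))
          - (a * Xb s ω - b ^ 2 / 2 * (S00 s * X0 s ω + S01 s * Xb s ω))) := by
      rw [integral_sub hc1.integrableOn_Ioc hc2.integrableOn_Ioc, hf1, hl1]
      ring
    have heqg : XN N u ω - Xb u ω = (∫ s in Set.Ioc 0 u, (c * X0N N s ω - c * X0 s ω))
        + (D / N) * ∑ i ∈ Finset.Icc 1 N, W i u ω := by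
      rw [integral_sub hc3.integrableOn_Ioc hc4.integrableOn_Ioc, hf2, hl2]
      ring
    have hb2nn : (0:ℝ) ≤ b^2/2 := by positivity
    have hbf : |X0N N u ω - X0 u ω| ≤ ∫ s in Set.Ioc 0 u,
        K1 * (|X0N N s ω - X0 s ω| + |XN N s ω - Xb s ω|) := by
      rw [heqf, ← Real.norm_eq_abs]
      refine le_trans (norm_integral_le_integral_norm _) ?_
      simp only [Real.norm_eq_abs]
      apply setIntegral_mono_on ((hc1.sub hc2).abs.integrableOn_Ioc)
        ((continuous_const.mul hZcont).integrableOn_Ioc) measurableSet_Ioc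
      intro s hs
      have hsT : s ∈ Set.Icc (0:ℝ) T := ⟨hs.1.le, le_trans hs.2 hu.2⟩
      have e : (a * XN N s ω - b ^ 2 / 2 * (S00 s * X0N N s ω + S01 s * XN N s ω))
          - (a * Xb s ω - b ^ 2 / 2 * (S00 s * X0 s ω + S01 s * Xb s ω))
          = a * (XN N s ω - Xb s ω) - b^2/2 * (S00 s * (X0N N s ω - X0 s ω)
            + S01 s * (XN N s ω - Xb s ω)) := by ring
      show |(a * XN N s ω - b ^ 2 / 2 * (S00 s * X0N N s ω + S01 s * XN N s ω))
          - (a * Xb s ω - b ^ 2 / 2 * (S00 s * X0 s ω + S01 s * Xb s ω))|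
          ≤ K1 * (|X0N N s ω - X0 s ω| + |XN N s ω - Xb s ω|)
      rw [e]
      have t1 := abs_sub (a * (XN N s ω - Xb s ω))
        (b^2/2 * (S00 s * (X0N N s ω - X0 s ω) + S01 s * (XN N s ω - Xb s ω)))
      rw [abs_mul, abs_mul, abs_of_nonneg hb2nn] at t1
      have t2 : |S00 s * (X0N N s ω - X0 s ω) + S01 s * (XN N s ω - Xb s ω)|
          ≤ C0 * |X0N N s ω - X0 s ω| + C1 * |XN N s ω - Xb s ω| := by
        refine le_trans (abs_add_le _ _) ?_
        rw [abs_mul, abs_mul]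
        exact add_le_add (mul_le_mul_of_nonneg_right (hC0 s hsT) (abs_nonneg _))
          (mul_le_mul_of_nonneg_right (hC1 s hsT) (abs_nonneg _))
      have t3 := mul_le_mul_of_nonneg_left t2 hb2nn
      have h4 : |a| * |XN N s ω - Xb s ω|
          + b^2/2 * (C0 * |X0N N s ω - X0 s ω| + C1 * |XN N s ω - Xb s ω|)
          ≤ K1 * (|X0N N s ω - X0 s ω| + |XN N s ω - Xb s ω|) := by
        rw [hK1_def]
        nlinarith [abs_nonneg (X0N N s ω - X0 s ω), abs_nonneg (XN N s ω - Xb s ω),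
          mul_nonneg hb2nn hC0nn, mul_nonneg hb2nn hC1nn, abs_nonneg a,
          mul_nonneg (mul_nonneg hb2nn hC0nn) (abs_nonneg (XN N s ω - Xb s ω)),
          mul_nonneg (mul_nonneg hb2nn hC1nn) (abs_nonneg (X0N N s ω - X0 s ω)),
          mul_nonneg (abs_nonneg a) (abs_nonneg (X0N N s ω - X0 s ω))]
      linarith
    have hDN : (0:ℝ) ≤ D/(N:ℝ) := div_nonneg hD (Nat.cast_nonneg N)
    have hbg : |XN N u ω - Xb u ω| ≤ (∫ s in Set.Ioc 0 u, |c| * |X0N N s ω - X0 s ω|)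
        + (D/N) * |∑ i ∈ Finset.Icc 1 N, W i u ω| := by
      rw [heqg]
      refine le_trans (abs_add_le _ _) (add_le_add ?_ ?_)
      · rw [← Real.norm_eq_abs]
        refine le_trans (norm_integral_le_integral_norm _) (le_of_eq ?_)
        simp only [Real.norm_eq_abs]
        congr 1
        funext s
        rw [show c * X0N N s ω - c * X0 s ω = c * (X0N N s ω - X0 s ω) by ring, abs_mul]
      · rw [abs_mul, abs_of_nonneg hDN]
    have hZnn : (0:ℝ) ≤ ∫ s in Set.Ioc 0 u,
        (|X0N N s ω - X0 s ω| + |XN N s ω - Xb s ω|) :=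
      setIntegral_nonneg measurableSet_Ioc fun s _ => add_nonneg (abs_nonneg _) (abs_nonneg _)
    have h7 : (∫ s in Set.Ioc 0 u, K1 * (|X0N N s ω - X0 s ω| + |XN N s ω - Xb s ω|))
        = K1 * ∫ s in Set.Ioc 0 u, (|X0N N s ω - X0 s ω| + |XN N s ω - Xb s ω|) :=
      integral_const_mul _ _
    have h8 : (∫ s in Set.Ioc 0 u, |c| * |X0N N s ω - X0 s ω|)
        ≤ |c| * ∫ s in Set.Ioc 0 u, (|X0N N s ω - X0 s ω| + |XN N s ω - Xb s ω|) := by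
      rw [← integral_const_mul]
      apply setIntegral_mono_on ((continuous_const.mul hfcont.abs).integrableOn_Ioc)
        ((continuous_const.mul hZcont).integrableOn_Ioc) measurableSet_Ioc
      intro s _
      show |c| * |X0N N s ω - X0 s ω| ≤ |c| * (|X0N N s ω - X0 s ω| + |XN N s ω - Xb s ω|)
      have := abs_nonneg (XN N s ω - Xb s ω)
      nlinarith [abs_nonneg c, abs_nonneg (XN N s ω - Xb s ω),
        mul_nonneg (abs_nonneg c) (abs_nonneg (XN N s ω - Xb s ω))]
    have h9 : K1 * (∫ s in Set.Ioc 0 u, (|X0N N s ω - X0 s ω| + |XN N s ω - Xb s ω|))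
        + |c| * (∫ s in Set.Ioc 0 u, (|X0N N s ω - X0 s ω| + |XN N s ω - Xb s ω|))
        ≤ K * ∫ s in Set.Ioc 0 u, (|X0N N s ω - X0 s ω| + |XN N s ω - Xb s ω|) := by
      rw [hK_def]
      nlinarith [hZnn]
    linarith [hbf, hbg, h7 ▸ hbf]
  refine ⟨⟨K, ?_⟩, ?_⟩
  · intro N hN
    filter_upwards [hfin N hN, hlim] with ω hfinω hlimω
    intro t htmem
    set Abar := (D/(N:ℝ)) * ⨆ s : Set.Icc (0:ℝ) t, |∑ i ∈ Finset.Icc 1 N, W i s.1 ω|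
      with hAbar_def
    have hDN : (0:ℝ) ≤ D/(N:ℝ) := div_nonneg hD (Nat.cast_nonneg N)
    have hBdd : BddAbove (Set.range fun s : Set.Icc (0:ℝ) t =>
        |∑ i ∈ Finset.Icc 1 N, W i s.1 ω|) := by
      have hcs : ContinuousOn (fun s : ℝ => |∑ i ∈ Finset.Icc 1 N, W i s ω|)
          (Set.Icc 0 t) :=
        (continuous_finset_sum _ fun i _ => (hBM i).2.2.1 ω).abs.continuousOn
      have h := (isCompact_Icc (a := (0:ℝ)) (b := t)).bddAbove_image hcs
      rwa [Set.image_eq_range] at h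
    have hZcont : Continuous fun s => |X0N N s ω - X0 s ω| + |XN N s ω - Xb s ω| :=
      ((hcontN N ω).1.sub (hcont ω).1).abs.add ((hcontN N ω).2.sub (hcont ω).2).abs
    have hb : ∀ u ∈ Set.Icc (0:ℝ) t,
        |X0N N u ω - X0 u ω| + |XN N u ω - Xb u ω|
          ≤ Abar + K * ∫ s in Set.Ioc 0 u,
              (|X0N N s ω - X0 s ω| + |XN N s ω - Xb s ω|) := by
      intro u hu
      have hu' : u ∈ Set.Icc (0:ℝ) T := ⟨hu.1, le_trans hu.2 htmem.2⟩
      have h1 := core N hN ω hfinω hlimω u hu'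
      have h2 : (D/(N:ℝ)) * |∑ i ∈ Finset.Icc 1 N, W i u ω| ≤ Abar :=
        mul_le_mul_of_nonneg_left (le_ciSup hBdd ⟨u, hu⟩) hDN
      exact le_trans h1 (add_le_add_left h2 _)
    have hg := my_gronwall t K htmem.1 hKpos _ (fun _ => Abar) hZcont continuous_const hb
    have hexp : (∫ s in Set.Ioc 0 t, Real.exp (-(K*s)) * Abar)
        = Abar * ((1 - Real.exp (-(K*t)))/K) := by
      rw [← intervalIntegral.integral_of_le htmem.1]
      have hderiv : ∀ s ∈ Set.uIcc (0:ℝ) t,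
          HasDerivAt (fun v => -(Real.exp (-(K*v))/K) * Abar) (Real.exp (-(K*s)) * Abar) s := by
        intro s _
        have h1 : HasDerivAt (fun v : ℝ => -(K*v)) (-K) s := by
          simpa using ((hasDerivAt_id s).const_mul (-K))
        have h2 := (((h1.exp.div_const K).neg).mul_const Abar :
          HasDerivAt (fun v => -(Real.exp (-(K*v))/K) * Abar) _ s)
        refine h2.congr_deriv ?_
        field_simp
      rw [intervalIntegral.integral_eq_sub_of_hasDerivAt hderiv
        ((((continuous_const.mul continuous_id).neg.rexp).mul
          continuous_const).intervalIntegrable _ _)]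
      rw [mul_zero, neg_zero, Real.exp_zero]
      field_simp
      ring
    rw [hexp] at hg
    have hee : Real.exp (K*t) * Real.exp (-(K*t)) = 1 := by
      rw [← Real.exp_add]; simp
    calc |X0N N t ω - X0 t ω| + |XN N t ω - Xb t ω|
        ≤ Abar + K * Real.exp (K*t) * (Abar * ((1 - Real.exp (-(K*t)))/K)) := hg
      _ = Real.exp (K * t) * Abar := by
          calc Abar + K * Real.exp (K*t) * (Abar * ((1 - Real.exp (-(K*t)))/K))
              = Abar + (Abar * (1 - Real.exp (-(K*t))) * Real.exp (K*t)) * (K/K) := by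
                ring
            _ = Abar + Abar * Real.exp (K*t)
                - Abar * (Real.exp (K*t) * Real.exp (-(K*t))) := by
                rw [div_self hKpos.ne']; ring
            _ = Real.exp (K * t) * Abar := by rw [hee]; ring
      _ = Real.exp (K * t) * (D / N) *
          ⨆ s : Set.Icc (0:ℝ) t, |∑ i ∈ Finset.Icc 1 N, W i s.1 ω| := by
          rw [hAbar_def]; ring
  · intro t htmem
    have hWmeas : ∀ i s, Measurable (fun ω => W i s ω) := fun i s =>
      ((hBM i).1 s).mono (hFle s) le_rfl
    have hWcont : ∀ i ω, Continuous fun s => W i s ω := fun i ω => (hBM i).2.2.1 ω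
    have hWlaw : ∀ i (s : ℝ), 0 ≤ s →
        P.map (fun ω => W i s ω) = gaussianReal 0 s.toNNReal := by
      intro i s hs
      have h := (hBM i).2.2.2.1 0 s le_rfl hs
      simpa [(hBM i).2.1] using h
    have hWind : ∀ i j, i ≠ j → ∀ s : ℝ,
        IndepFun (fun ω => W i s ω) (fun ω => W j s ω) P := by
      intro i j hij s
      exact (hindep.indepFun hij).comp (measurable_pi_apply s) (measurable_pi_apply s)
    have hkey := key_limits P W hWmeas hWcont hWlaw hWind t htmem.1
    have hfin' : ∀ᵐ ω ∂P, ∀ N : ℕ, 1 ≤ N → ∀ u ∈ Set.Icc (0:ℝ) T,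
        X0N N u ω = x00 + (∫ s in Set.Ioc 0 u,
            (a * XN N s ω - b ^ 2 / 2 * (S00 s * X0N N s ω + S01 s * XN N s ω)))
          + D0 * W 0 u ω ∧
        XN N u ω = x0 + (∫ s in Set.Ioc 0 u, c * X0N N s ω)
          + (D / N) * ∑ i ∈ Finset.Icc 1 N, W i u ω := by
      rw [ae_all_iff]
      intro N
      by_cases hN : 1 ≤ N
      · filter_upwards [hfin N hN] with ω h _
        exact h
      · filter_upwards with ω h
        omega
    filter_upwards [hkey, hlim, hfin'] with ω hωkey hlimω hfinω
    obtain ⟨hk1, hk2⟩ := hωkey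
    have hZto : Tendsto (fun N : ℕ =>
        |X0N N t ω - X0 t ω| + |XN N t ω - Xb t ω|) atTop (𝓝 0) := by
      have hbnd : Tendsto (fun N : ℕ =>
          D * (|∑ i ∈ Finset.Icc 1 N, W i t ω| / N)
          + K * Real.exp (K*t) * (D * ((∫ s in Set.Ioc 0 t,
              |∑ i ∈ Finset.Icc 1 N, W i s ω|) / N))) atTop (𝓝 0) := by
        have h := (hk1.const_mul D).add ((hk2.const_mul D).const_mul (K * Real.exp (K*t)))
        simpa using h
      apply tendsto_of_tendsto_of_tendsto_of_le_of_le' tendsto_const_nhds hbnd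
      · exact Eventually.of_forall fun N => add_nonneg (abs_nonneg _) (abs_nonneg _)
      · filter_upwards [eventually_ge_atTop 1] with N hN
        have hNpos : (0:ℝ) < (N:ℝ) := by
          exact_mod_cast Nat.pos_of_ne_zero (by omega)
        have hZcont : Continuous fun s => |X0N N s ω - X0 s ω| + |XN N s ω - Xb s ω| :=
          ((hcontN N ω).1.sub (hcont ω).1).abs.add ((hcontN N ω).2.sub (hcont ω).2).abs
        have hAcont : Continuous fun s : ℝ =>
            (D/(N:ℝ)) * |∑ i ∈ Finset.Icc 1 N, W i s ω| :=
          continuous_const.mul (continuous_finset_sum _ fun i _ => (hBM i).2.2.1 ω).abs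
        have hb : ∀ u ∈ Set.Icc (0:ℝ) t,
            |X0N N u ω - X0 u ω| + |XN N u ω - Xb u ω|
              ≤ (D/(N:ℝ)) * |∑ i ∈ Finset.Icc 1 N, W i u ω|
                + K * ∫ s in Set.Ioc 0 u,
                    (|X0N N s ω - X0 s ω| + |XN N s ω - Xb s ω|) := by
          intro u hu
          exact core N hN ω (hfinω N hN) hlimω u ⟨hu.1, le_trans hu.2 htmem.2⟩
        have hg := my_gronwall t K htmem.1 hKpos _ _ hZcont hAcont hb
        have hDN : (0:ℝ) ≤ D/(N:ℝ) := div_nonneg hD (Nat.cast_nonneg N)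
        have h5 : (∫ s in Set.Ioc 0 t,
              Real.exp (-(K*s)) * ((D/(N:ℝ)) * |∑ i ∈ Finset.Icc 1 N, W i s ω|))
            ≤ (D/(N:ℝ)) * ∫ s in Set.Ioc 0 t, |∑ i ∈ Finset.Icc 1 N, W i s ω| := by
          rw [← integral_const_mul]
          apply setIntegral_mono_on
            ((((continuous_const.mul continuous_id).neg.rexp).mul hAcont).integrableOn_Ioc)
            ((continuous_const.mul (continuous_finset_sum _ fun i _ =>
              (hBM i).2.2.1 ω).abs).integrableOn_Ioc) measurableSet_Ioc
          intro s hs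
          have hle1 : Real.exp (-(K*s)) ≤ 1 := by
            rw [show (1:ℝ) = Real.exp 0 from (Real.exp_zero).symm]
            rw [Real.exp_le_exp]
            nlinarith [hs.1, hKpos]
          have hnn : (0:ℝ) ≤ (D/(N:ℝ)) * |∑ i ∈ Finset.Icc 1 N, W i s ω| :=
            mul_nonneg hDN (abs_nonneg _)
          calc Real.exp (-(K*s)) * ((D/(N:ℝ)) * |∑ i ∈ Finset.Icc 1 N, W i s ω|)
              ≤ 1 * ((D/(N:ℝ)) * |∑ i ∈ Finset.Icc 1 N, W i s ω|) :=
                mul_le_mul_of_nonneg_right hle1 hnn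
            _ = (D/(N:ℝ)) * |∑ i ∈ Finset.Icc 1 N, W i s ω| := one_mul _
        calc |X0N N t ω - X0 t ω| + |XN N t ω - Xb t ω|
            ≤ (D/(N:ℝ)) * |∑ i ∈ Finset.Icc 1 N, W i t ω|
              + K * Real.exp (K*t) * ∫ s in Set.Ioc 0 t,
                  Real.exp (-(K*s)) * ((D/(N:ℝ)) * |∑ i ∈ Finset.Icc 1 N, W i s ω|) := hg
          _ ≤ (D/(N:ℝ)) * |∑ i ∈ Finset.Icc 1 N, W i t ω|
              + K * Real.exp (K*t) * ((D/(N:ℝ)) * ∫ s in Set.Ioc 0 t,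
                  |∑ i ∈ Finset.Icc 1 N, W i s ω|) := by
                have hKe : (0:ℝ) ≤ K * Real.exp (K*t) := by positivity
                nlinarith [mul_le_mul_of_nonneg_left h5 hKe]
          _ = D * (|∑ i ∈ Finset.Icc 1 N, W i t ω| / N)
              + K * Real.exp (K*t) * (D * ((∫ s in Set.Ioc 0 t,
                  |∑ i ∈ Finset.Icc 1 N, W i s ω|) / N)) := by
                field_simp
    constructor
    · have h1 : Tendsto (fun N : ℕ => |X0N N t ω - X0 t ω|) atTop (𝓝 0) := by
        apply tendsto_of_tendsto_of_tendsto_of_le_of_le tendsto_const_nhds hZto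
        · exact fun N => abs_nonneg _
        · exact fun N => le_add_of_nonneg_right (abs_nonneg _)
      rw [tendsto_iff_dist_tendsto_zero]
      simpa [Real.dist_eq] using h1
    · have h1 : Tendsto (fun N : ℕ => |XN N t ω - Xb t ω|) atTop (𝓝 0) := by
        apply tendsto_of_tendsto_of_tendsto_of_le_of_le tendsto_const_nhds hZto
        · exact fun N => abs_nonneg _
        · exact fun N => le_add_of_nonneg_left (abs_nonneg _)
      rw [tendsto_iff_dist_tendsto_zero]
      simpa [Real.dist_eq] using h1
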